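/- Every Gorenstein strongly fp-injective left R-module is Gorenstein injective. -/

import Mathlib

open CategoryTheory

universe u

/-- The `n`-th Ext group `Ext^n_R(P, M)` of two left `R`-modules, computed in the
abelian category of `R`-modules (as a `ℤ`-linear category, so that `R` may be
noncommutative). -/
noncomputable def ExtGrp (R : Type u) [Ring R] (n : ℕ)
    (P M : Type u) [AddCommGroup P] [Module R P] [AddCommGroup M] [Module R M] : Type u :=
  ((Ext ℤ (ModuleCat.{u} R) n).obj (Opposite.op (ModuleCat.of R P))).obj (ModuleCat.of R M)

/-- A left `R`-module `M` is strongly fp-injective if `Ext^n_R(P, M) = 0` for every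
finitely presented left `R`-module `P` and every `n ≥ 1`. -/
def StronglyFpInjective (R : Type u) [Ring R] (M : Type u) [AddCommGroup M] [Module R M] : Prop :=
  ∀ (P : Type u) [AddCommGroup P] [Module R P], Module.FinitePresentation R P →
    ∀ n : ℕ, 1 ≤ n → Subsingleton (ExtGrp R n P M)

/-- A left `R`-module `M` is fp-injective if `Ext¹_R(P, M) = 0` for every finitely
presented left `R`-module `P`. -/
def FpInjective (R : Type u) [Ring R] (M : Type u) [AddCommGroup M] [Module R M] : Prop :=
  ∀ (P : Type u) [AddCommGroup P] [Module R P], Module.FinitePresentation R P →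
    Subsingleton (ExtGrp R 1 P M)

/-- A left `R`-module `N` is Gorenstein strongly fp-injective if it is a cycle module of
an acyclic complex of injective modules which stays acyclic after applying `Hom_R(J, -)`
for every strongly fp-injective module `J`. -/
def GorensteinSFpInjective (R : Type u) [Ring R] (N : Type u)
    [AddCommGroup N] [Module R N] : Prop :=
  ∃ C : CochainComplex (ModuleCat.{u} R) ℤ,
    (∀ n : ℤ, Module.Injective R (C.X n)) ∧
    (∀ n : ℤ, C.ExactAt n) ∧
    (∀ (J : Type u) [AddCommGroup J] [Module R J], StronglyFpInjective R J →
      ∀ (n : ℤ) (φ : (ModuleCat.of R J : ModuleCat.{u} R) ⟶ C.X n), φ ≫ C.d n (n + 1) = 0 →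
        ∃ ψ : (ModuleCat.of R J : ModuleCat.{u} R) ⟶ C.X (n - 1), ψ ≫ C.d (n - 1) n = φ) ∧
    ∃ n : ℤ, Nonempty (N ≃ₗ[R] LinearMap.ker (C.d n (n + 1)).hom)

/-- A left `R`-module `N` is Gorenstein injective if it is a cycle module of an acyclic
complex of injective modules which stays acyclic after applying `Hom_R(I, -)` for every
injective module `I`. -/
def GorensteinInjective (R : Type u) [Ring R] (N : Type u)
    [AddCommGroup N] [Module R N] : Prop :=
  ∃ C : CochainComplex (ModuleCat.{u} R) ℤ,
    (∀ n : ℤ, Module.Injective R (C.X n)) ∧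
    (∀ n : ℤ, C.ExactAt n) ∧
    (∀ (I : Type u) [AddCommGroup I] [Module R I], Module.Injective R I →
      ∀ (n : ℤ) (φ : (ModuleCat.of R I : ModuleCat.{u} R) ⟶ C.X n), φ ≫ C.d n (n + 1) = 0 →
        ∃ ψ : (ModuleCat.of R I : ModuleCat.{u} R) ⟶ C.X (n - 1), ψ ≫ C.d (n - 1) n = φ) ∧
    ∃ n : ℤ, Nonempty (N ≃ₗ[R] LinearMap.ker (C.d n (n + 1)).hom)

open Limits in
lemma subsingleton_extGrp_of_injective {R : Type u} [Ring R]
    (I : Type u) [AddCommGroup I] [Module R I] (hI : Module.Injective R I)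
    (P : Type u) [AddCommGroup P] [Module R P] (n : ℕ) (hn : 1 ≤ n) :
    Subsingleton (ExtGrp R n P I) := by
  obtain ⟨m, rfl⟩ : ∃ m, n = m + 1 := ⟨n - 1, by omega⟩
  let X := ModuleCat.of R P
  let Y := ModuleCat.of R I
  let Pr : ProjectiveResolution X := ProjectiveResolution.of X
  suffices h : IsZero (((Ext ℤ (ModuleCat.{u} R) (m + 1)).obj (Opposite.op X)).obj Y) by
    have hz : ∀ x : (((Ext ℤ (ModuleCat.{u} R) (m + 1)).obj (Opposite.op X)).obj Y), x = 0 := by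
      intro x
      have h1 : (𝟙 (((Ext ℤ (ModuleCat.{u} R) (m + 1)).obj (Opposite.op X)).obj Y)) =
          (0 : _ ⟶ _) := h.eq_of_src _ _
      calc x = (𝟙 (((Ext ℤ (ModuleCat.{u} R) (m + 1)).obj (Opposite.op X)).obj Y)) x := rfl
        _ = (0 : ((Ext ℤ (ModuleCat.{u} R) (m + 1)).obj (Opposite.op X)).obj Y ⟶ _) x := by
            rw [h1]
        _ = 0 := rfl
    exact ⟨fun a b => (hz a).trans (hz b).symm⟩
  refine IsZero.of_iso ?_ (Pr.isoExt (m + 1) Y)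
  rw [← HomologicalComplex.exactAt_iff_isZero_homology]
  rw [HomologicalComplex.exactAt_iff' _ m (m + 1) (m + 2)
    (by simp [CochainComplex.prev]) (by simp [CochainComplex.next])]
  rw [ShortComplex.moduleCat_exact_iff]
  intro (φ : Pr.complex.X (m + 1) ⟶ Y) hφ
  -- `hφ` says `Pr.complex.d (m + 2) (m + 1) ≫ φ = 0`
  have hφ' : Pr.complex.d (m + 2) (m + 1) ≫ φ = 0 := hφ
  -- exactness of the projective resolution at `m + 1`
  have hex := (HomologicalComplex.exactAt_iff' Pr.complex (m + 2) (m + 1) m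
    (by simp [ChainComplex.prev]) (by simp [ChainComplex.next])).1
    (Pr.complex_exactAt_succ m)
  rw [ShortComplex.moduleCat_exact_iff] at hex
  set d1 : Pr.complex.X (m + 1) →ₗ[R] Pr.complex.X m := (Pr.complex.d (m + 1) m).hom with hd1
  have hker : LinearMap.ker d1 ≤ LinearMap.ker φ.hom := by
    intro x hx
    obtain ⟨y, hy⟩ := hex x hx
    have h0 : φ (Pr.complex.d (m + 2) (m + 1) y) = 0 := by
      have := congrArg (fun f => f.hom y) hφ'
      exact this
    rw [LinearMap.mem_ker, ← hy]
    exact h0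
  let φ' : (Pr.complex.X (m + 1) ⧸ LinearMap.ker d1) →ₗ[R] Y :=
    Submodule.liftQ (LinearMap.ker d1) φ.hom hker
  let e : (Pr.complex.X (m + 1) ⧸ LinearMap.ker d1) ≃ₗ[R] LinearMap.range d1 :=
    LinearMap.quotKerEquivRange d1
  let ψ₀ : LinearMap.range d1 →ₗ[R] Y := φ'.comp (e.symm : LinearMap.range d1 →ₗ[R] _)
  obtain ⟨h, hh⟩ := hI.out (LinearMap.range d1).subtype (Submodule.injective_subtype _) ψ₀
  refine ⟨ModuleCat.ofHom h, ?_⟩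
  show Pr.complex.d (m + 1) m ≫ ModuleCat.ofHom h = φ
  ext x
  show h (d1 x) = φ x
  have h2 : h (d1 x) = ψ₀ ⟨d1 x, LinearMap.mem_range_self d1 x⟩ :=
    hh ⟨d1 x, LinearMap.mem_range_self d1 x⟩
  rw [h2]
  show φ' (e.symm ⟨d1 x, _⟩) = φ x
  have h3 : e (Submodule.Quotient.mk x) = ⟨d1 x, LinearMap.mem_range_self d1 x⟩ := rfl
  rw [← h3, LinearEquiv.symm_apply_apply]
  exact Submodule.liftQ_apply _ _ _

lemma stronglyFpInjective_of_injective {R : Type u} [Ring R]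
    (I : Type u) [AddCommGroup I] [Module R I] (hI : Module.Injective R I) :
    StronglyFpInjective R I := fun P _ _ _ n hn =>
  subsingleton_extGrp_of_injective I hI P n hn

/-- Every Gorenstein strongly fp-injective left `R`-module is Gorenstein injective. -/
theorem gorensteinInjective_of_gorensteinSFpInjective
    (R : Type u) [Ring R] (N : Type u) [AddCommGroup N] [Module R N]
    (h : GorensteinSFpInjective R N) : GorensteinInjective R N := by
  obtain ⟨C, hinj, hex, hlift, n, ⟨e⟩⟩ := h
  exact ⟨C, hinj, hex, fun I _ _ hI k φ hφ =>
    hlift I (stronglyFpInjective_of_injective I hI) k φ hφ, n, ⟨e⟩⟩
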